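/- Suppose γ₁,…,γ_{n-1} ≥ 0, ∑γⱼ = 1, and for some x⁰ ∈ C([n],k) (viewed as a 0/1 vector on the first n−1 coordinates) we have ∑_{j=1}^{n-1} γⱼ x⁰ⱼ = k/n. Then for every ε > 0 there exists γ' with γ'ⱼ ≥ 0, ∑γ'ⱼ = 1, |γ' − γ| < ε, such that ∑γ'ⱼ x⁰ⱼ > k/n and ∑γ'ⱼ xⱼ > k/n for every x ∈ C([n],k) with ∑γⱼxⱼ > k/n. -/

import Mathlib

set_option maxHeartbeats 1000000 in
theorem stmt8 (n k : ℕ) (hk : 1 ≤ k) (hkn : k < n) (γ : ℕ → ℝ)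
    (hγ0 : ∀ j ∈ Finset.range (n - 1), 0 ≤ γ j)
    (hγ1 : ∑ j ∈ Finset.range (n - 1), γ j = 1)
    (x0 : Finset ℕ) (hx0 : x0 ⊆ Finset.range n) (hx0c : x0.card = k)
    (heq : ∑ j ∈ Finset.range (n - 1), γ j * (if j ∈ x0 then (1 : ℝ) else 0)
        = (k : ℝ) / n) :
    ∀ ε > (0 : ℝ), ∃ γ' : ℕ → ℝ,
      (∀ j ∈ Finset.range (n - 1), 0 ≤ γ' j) ∧
      (∑ j ∈ Finset.range (n - 1), γ' j = 1) ∧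
      (∀ j ∈ Finset.range (n - 1), |γ' j - γ j| < ε) ∧
      ((k : ℝ) / n < ∑ j ∈ Finset.range (n - 1), γ' j * (if j ∈ x0 then (1 : ℝ) else 0)) ∧
      ∀ x : Finset ℕ, x ⊆ Finset.range n → x.card = k →
        ((k : ℝ) / n < ∑ j ∈ Finset.range (n - 1), γ j * (if j ∈ x then (1 : ℝ) else 0)) →
        ((k : ℝ) / n < ∑ j ∈ Finset.range (n - 1), γ' j * (if j ∈ x then (1 : ℝ) else 0)) := by
  classical
  intro ε hε
  set N := n - 1 with hN
  have hn0 : (0:ℝ) < n := by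
    have : 0 < n := by omega
    exact_mod_cast this
  have hkn1 : (k:ℝ)/n < 1 := by rw [div_lt_one hn0]; exact_mod_cast hkn
  have hkn0 : (0:ℝ) < (k:ℝ)/n := by
    apply div_pos _ hn0; exact_mod_cast hk
  set S := x0 ∩ Finset.range N with hSdef
  have hSsub : S ⊆ Finset.range N := Finset.inter_subset_right
  have hSx0 : S ⊆ x0 := Finset.inter_subset_left
  have hm : 0 < S.card := by
    rcases Nat.eq_zero_or_pos S.card with h0 | h
    · exfalso
      have hSe : S = ∅ := Finset.card_eq_zero.mp h0
      have : ∑ j ∈ Finset.range N, γ j * (if j ∈ x0 then (1:ℝ) else 0) = 0 := by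
        apply Finset.sum_eq_zero
        intro j hj
        have hjx : j ∉ x0 := by
          intro hj'
          have : j ∈ S := Finset.mem_inter.2 ⟨hj', hj⟩
          simp [hSe] at this
        simp [hjx]
      rw [this] at heq
      linarith
    · exact h
  set m := S.card with hmdef
  have hmR : (0:ℝ) < (m:ℝ) := by exact_mod_cast hm
  set u : ℕ → ℝ := fun j => if j ∈ S then 1/(m:ℝ) else 0 with hu
  have hu0 : ∀ j, 0 ≤ u j := by
    intro j; simp only [hu]; split <;> positivity
  have hu1 : ∀ j, u j ≤ 1 := by
    intro j; simp only [hu]; split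
    · rw [div_le_one hmR]; exact_mod_cast hm
    · norm_num
  -- dot product of u with indicator of any x
  have hdot : ∀ x : Finset ℕ, ∑ j ∈ Finset.range N, u j * (if j ∈ x then (1:ℝ) else 0)
      = ((S ∩ x).card : ℝ) / m := by
    intro x
    have : ∀ j ∈ Finset.range N, u j * (if j ∈ x then (1:ℝ) else 0)
        = if j ∈ S ∩ x then 1/(m:ℝ) else 0 := by
      intro j hj
      simp only [hu, Finset.mem_inter]
      by_cases h1 : j ∈ S <;> by_cases h2 : j ∈ x <;> simp [h1, h2]
    rw [Finset.sum_congr rfl this, Finset.sum_ite_mem]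
    have hinter : Finset.range N ∩ (S ∩ x) = S ∩ x := by
      apply Finset.inter_eq_right.2
      exact (Finset.inter_subset_left).trans hSsub
    rw [hinter, Finset.sum_const, nsmul_eq_mul]
    ring
  have husum : ∑ j ∈ Finset.range N, u j = 1 := by
    have := hdot (Finset.range N)
    have h2 : ∀ j ∈ Finset.range N, u j * (if j ∈ Finset.range N then (1:ℝ) else 0) = u j := by
      intro j hj; simp [hj]
    rw [Finset.sum_congr rfl h2] at this
    rw [this]
    have : S ∩ Finset.range N = S := Finset.inter_eq_left.2 hSsub
    rw [this]; field_simp; rfl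
  have hux0 : ∑ j ∈ Finset.range N, u j * (if j ∈ x0 then (1:ℝ) else 0) = 1 := by
    rw [hdot x0]
    have : S ∩ x0 = S := Finset.inter_eq_left.2 hSx0
    rw [this]; field_simp; rfl
  -- γ_j ≤ 1
  have hγle : ∀ j ∈ Finset.range N, γ j ≤ 1 := by
    intro j hj
    calc γ j ≤ ∑ i ∈ Finset.range N, γ i := Finset.single_le_sum hγ0 hj
    _ = 1 := hγ1
  -- delta
  set dot : Finset ℕ → ℝ := fun x => ∑ j ∈ Finset.range N, γ j * (if j ∈ x then (1:ℝ) else 0)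
    with hdotdef
  have hdotle1 : ∀ x : Finset ℕ, dot x ≤ 1 := by
    intro x
    calc dot x ≤ ∑ j ∈ Finset.range N, γ j := by
          apply Finset.sum_le_sum
          intro j hj
          have := hγ0 j hj
          split <;> nlinarith
    _ = 1 := hγ1
  clear_value S m u dot
  have hδex : ∃ δ : ℝ, 0 < δ ∧ δ ≤ 1 ∧
      ∀ x : Finset ℕ, x ⊆ Finset.range n → (k:ℝ)/n < dot x → δ ≤ dot x - (k:ℝ)/n := by
    classical
    set F := (Finset.range n).powerset.filter (fun x => (k:ℝ)/n < dot x) with hF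
    set D := insert (1:ℝ) (F.image (fun x => dot x - (k:ℝ)/n)) with hD
    have hDne : D.Nonempty := ⟨1, Finset.mem_insert_self _ _⟩
    refine ⟨D.min' hDne, ?_, ?_, ?_⟩
    · have hmem : D.min' hDne ∈ D := D.min'_mem hDne
      simp only [hD] at hmem
      rcases Finset.mem_insert.mp hmem with h | h
      · exact lt_of_lt_of_eq one_pos h.symm
      · rcases Finset.mem_image.mp h with ⟨x, hxF, hxe⟩
        have h2 := (Finset.mem_filter.mp hxF).2
        have hxe' : dot x - (k:ℝ)/n = D.min' hDne := hxe
        linarith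
    · exact Finset.min'_le _ _ (Finset.mem_insert_self _ _)
    · intro x hxs hxd
      apply Finset.min'_le
      rw [hD]
      apply Finset.mem_insert_of_mem
      exact Finset.mem_image.mpr
        ⟨x, Finset.mem_filter.mpr ⟨Finset.mem_powerset.mpr hxs, hxd⟩, rfl⟩
  obtain ⟨δ, hδpos, hδ1, hδle⟩ := hδex
  obtain ⟨t, ht0, htε, htδ, ht1⟩ : ∃ t : ℝ, 0 < t ∧ t ≤ ε/3 ∧ t < δ ∧ t ≤ 1 :=
    ⟨min (ε/3) (δ/2), lt_min (by linarith) (by linarith), min_le_left _ _,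
      lt_of_le_of_lt (min_le_right _ _) (by linarith),
      le_trans (min_le_right _ _) (by linarith)⟩
  have hsplit : ∀ x : Finset ℕ,
      ∑ j ∈ Finset.range N, ((1-t)*γ j + t*u j) * (if j ∈ x then (1:ℝ) else 0)
      = (1-t) * (∑ j ∈ Finset.range N, γ j * (if j ∈ x then (1:ℝ) else 0))
        + t * (∑ j ∈ Finset.range N, u j * (if j ∈ x then (1:ℝ) else 0)) := by
    intro x
    rw [Finset.mul_sum, Finset.mul_sum, ← Finset.sum_add_distrib]
    apply Finset.sum_congr rfl
    intro j hj; ring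
  refine ⟨fun j => (1-t)*γ j + t*u j, ?_, ?_, ?_, ?_, ?_⟩
  · intro j hj
    have h1 := hγ0 j hj
    have h2 := hu0 j
    show 0 ≤ (1-t)*γ j + t*u j
    nlinarith
  · show ∑ j ∈ Finset.range N, ((1-t)*γ j + t*u j) = 1
    rw [Finset.sum_add_distrib, ← Finset.mul_sum, ← Finset.mul_sum, hγ1, husum]; ring
  · intro j hj
    have h1 := hγ0 j hj
    have h2 := hγle j hj
    have h3 := hu0 j
    have h4 := hu1 j
    show |((1-t)*γ j + t*u j) - γ j| < ε
    have he : |((1-t)*γ j + t*u j) - γ j| = t * |u j - γ j| := by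
      rw [show ((1-t)*γ j + t*u j) - γ j = t * (u j - γ j) by ring,
        abs_mul, abs_of_pos ht0]
    rw [he]
    have hb : |u j - γ j| ≤ 1 := by
      rw [abs_le]; constructor <;> nlinarith
    calc t * |u j - γ j| ≤ t * 1 := mul_le_mul_of_nonneg_left hb ht0.le
    _ = t := mul_one t
    _ < ε := by linarith
  · show (k:ℝ)/n < ∑ j ∈ Finset.range N, ((1-t)*γ j + t*u j) * (if j ∈ x0 then (1:ℝ) else 0)
    rw [hsplit x0, heq, hux0]
    linarith [mul_pos ht0 (show (0:ℝ) < 1 - (k:ℝ)/n by linarith)]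
  · intro x hxs hxc hxd
    have hUx : 0 ≤ ∑ j ∈ Finset.range N, u j * (if j ∈ x then (1:ℝ) else 0) := by
      apply Finset.sum_nonneg
      intro j hj
      exact mul_nonneg (hu0 j) (by split <;> norm_num)
    show (k:ℝ)/n < ∑ j ∈ Finset.range N, ((1-t)*γ j + t*u j) * (if j ∈ x then (1:ℝ) else 0)
    rw [hsplit x]
    have hxd' : (k:ℝ)/n < dot x := by rw [hdotdef]; exact hxd
    have hδx := hδle x hxs hxd'
    have hx1 := hdotle1 x
    have hdx : dot x = ∑ j ∈ Finset.range N, γ j * (if j ∈ x then (1:ℝ) else 0) := by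
      rw [hdotdef]
    rw [hdx] at hδx hx1
    linarith [mul_nonneg ht0.le hUx,
      mul_le_mul_of_nonneg_left hx1 ht0.le]
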